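/- For 0 < q < 1, for all n ≥ 0 and all real x with (1-q)x² ≤ 4 (i.e. x ∈ S(q) = [-2/√(1-q), 2/√(1-q)]): |H_n(x|q)| ≤ W_n(q)·(1-q)^{-n/2}, where W_n(q) = Σ_{i=0}^{n} [n choose i]_q. -/

import Mathlib

open Finset

noncomputable section

/-- q-number [n]_q = 1 + q + ... + q^{n-1} -/
def qNum (q : ℝ) (n : ℕ) : ℝ := ∑ i ∈ Finset.range n, q ^ i

/-- q-factorial [n]_q! -/
def qFact (q : ℝ) (n : ℕ) : ℝ := ∏ i ∈ Finset.range n, qNum q (i + 1)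

/-- Gaussian binomial coefficient -/
def qBinom (q : ℝ) (n k : ℕ) : ℝ :=
  if k ≤ n then qFact q n / (qFact q (n - k) * qFact q k) else 0

/-- q-Hermite polynomials H_n(x|q) -/
def qHermite (q x : ℝ) : ℕ → ℝ
  | 0 => 1
  | 1 => x
  | n + 2 => x * qHermite q x (n + 1) - qNum q (n + 1) * qHermite q x n

/-- Chebyshev polynomials of the second kind -/
def chebU (x : ℝ) : ℕ → ℝ
  | 0 => 1
  | 1 => 2 * x
  | n + 2 => 2 * x * chebU x (n + 1) - chebU x n

/-- probabilistic Hermite polynomials He_n -/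
def hermiteHe (x : ℝ) : ℕ → ℝ
  | 0 => 1
  | 1 => x
  | n + 2 => x * hermiteHe x (n + 1) - (n + 1 : ℝ) * hermiteHe x n

/-- Al-Salam–Chihara polynomials P_n(x|y,ρ,q) -/
def ascP (q y ρ x : ℝ) : ℕ → ℝ
  | 0 => 1
  | 1 => x - ρ * y
  | n + 2 => (x - ρ * y * q ^ (n + 1)) * ascP q y ρ x (n + 1)
      - (1 - ρ ^ 2 * q ^ n) * qNum q (n + 1) * ascP q y ρ x n


lemma qNum_pos {q : ℝ} (hq : 0 < q) (n : ℕ) : 0 < qNum q (n + 1) :=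
  Finset.sum_pos (fun i _ => pow_pos hq i) (by simp)

lemma qFact_pos {q : ℝ} (hq : 0 < q) (n : ℕ) : 0 < qFact q n :=
  Finset.prod_pos (fun i _ => qNum_pos hq i)

lemma qFact_zero (q : ℝ) : qFact q 0 = 1 := by simp [qFact]

lemma qFact_succ (q : ℝ) (n : ℕ) : qFact q (n + 1) = qFact q n * qNum q (n + 1) :=
  Finset.prod_range_succ _ _

lemma qNum_add (q : ℝ) (a b : ℕ) : qNum q (a + b) = qNum q a + q ^ a * qNum q b := by
  unfold qNum
  rw [Finset.sum_range_add, Finset.mul_sum]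
  simp [pow_add]

lemma qBinom_of_le {q : ℝ} {n k : ℕ} (h : k ≤ n) :
    qBinom q n k = qFact q n / (qFact q (n - k) * qFact q k) := if_pos h

lemma qBinom_of_gt {q : ℝ} {n k : ℕ} (h : n < k) : qBinom q n k = 0 := if_neg (by omega)

lemma qBinom_zero {q : ℝ} (hq : 0 < q) (n : ℕ) : qBinom q n 0 = 1 := by
  rw [qBinom_of_le (Nat.zero_le n)]
  simp [qFact_zero, div_self (qFact_pos hq n).ne']

lemma qBinom_self {q : ℝ} (hq : 0 < q) (n : ℕ) : qBinom q n n = 1 := by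
  rw [qBinom_of_le le_rfl]
  simp [qFact_zero, div_self (qFact_pos hq n).ne']

lemma qBinom_nonneg {q : ℝ} (hq : 0 < q) (n k : ℕ) : 0 ≤ qBinom q n k := by
  unfold qBinom
  split
  · exact div_nonneg (qFact_pos hq n).le (mul_nonneg (qFact_pos hq _).le (qFact_pos hq _).le)
  · exact le_refl _

lemma qPascal1 {q : ℝ} (hq : 0 < q) {n k : ℕ} (h : k ≤ n) :
    qBinom q (n + 1) (k + 1) = qBinom q n k + q ^ (k + 1) * qBinom q n (k + 1) := by
  rcases eq_or_lt_of_le h with rfl | hlt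
  · rw [qBinom_self hq, qBinom_self hq, qBinom_of_gt (Nat.lt_succ_self k)]
    ring
  · obtain ⟨c, rfl⟩ : ∃ c, n = k + c + 1 := ⟨n - k - 1, by omega⟩
    rw [qBinom_of_le (by omega), qBinom_of_le (by omega), qBinom_of_le (by omega)]
    rw [show k + c + 1 + 1 - (k + 1) = c + 1 by omega, show k + c + 1 - k = c + 1 by omega,
      show k + c + 1 - (k + 1) = c by omega]
    rw [show k + c + 1 + 1 = (k + c + 1) + 1 by rfl, qFact_succ q (k + c + 1),
      show k + c + 1 + 1 = (k + 1) + (c + 1) by omega, qNum_add q (k + 1) (c + 1),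
      qFact_succ q k, qFact_succ q c]
    have p1 := (qFact_pos hq (k + c + 1)).ne'
    have p2 := (qFact_pos hq k).ne'
    have p3 := (qFact_pos hq c).ne'
    have p4 := (qNum_pos hq k).ne'
    have p5 := (qNum_pos hq c).ne'
    field_simp

lemma qPascal2 {q : ℝ} (hq : 0 < q) {n k : ℕ} (h : k ≤ n) :
    qBinom q (n + 1) (k + 1) = q ^ (n - k) * qBinom q n k + qBinom q n (k + 1) := by
  rcases eq_or_lt_of_le h with rfl | hlt
  · rw [qBinom_self hq, qBinom_self hq, qBinom_of_gt (Nat.lt_succ_self k)]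
    simp
  · obtain ⟨c, rfl⟩ : ∃ c, n = k + c + 1 := ⟨n - k - 1, by omega⟩
    rw [qBinom_of_le (by omega), qBinom_of_le (by omega), qBinom_of_le (by omega)]
    rw [show k + c + 1 + 1 - (k + 1) = c + 1 by omega, show k + c + 1 - k = c + 1 by omega,
      show k + c + 1 - (k + 1) = c by omega]
    rw [show k + c + 1 + 1 = (k + c + 1) + 1 by rfl, qFact_succ q (k + c + 1),
      show k + c + 1 + 1 = (c + 1) + (k + 1) by omega, qNum_add q (c + 1) (k + 1),
      qFact_succ q k, qFact_succ q c]
    have p1 := (qFact_pos hq (k + c + 1)).ne'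
    have p2 := (qFact_pos hq k).ne'
    have p3 := (qFact_pos hq c).ne'
    have p4 := (qNum_pos hq k).ne'
    have p5 := (qNum_pos hq c).ne'
    field_simp
    ring

def qS (q : ℝ) (w : ℂ) (n : ℕ) : ℂ := ∑ k ∈ Finset.range (n + 1), (qBinom q n k : ℂ) * w ^ k

lemma qS_shift {q : ℝ} (hq : 0 < q) (v : ℂ) (n : ℕ) :
    ∑ k ∈ Finset.range (n + 1), (qBinom q n (k + 1) : ℂ) * v ^ (k + 1)
      = qS q v n - 1 := by
  unfold qS
  rw [Finset.sum_range_succ, qBinom_of_gt (Nat.lt_succ_self n),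
    Finset.sum_range_succ' (fun k => (qBinom q n k : ℂ) * v ^ k) n]
  simp [qBinom_zero hq]

lemma qS_rec1 {q : ℝ} (hq : 0 < q) (w : ℂ) (n : ℕ) :
    qS q w (n + 1) = w * qS q w n + qS q ((q : ℂ) * w) n := by
  have key : ∀ k ∈ Finset.range (n + 1), ((qBinom q (n + 1) (k + 1) : ℝ) : ℂ) * w ^ (k + 1)
      = w * ((qBinom q n k : ℂ) * w ^ k) + (qBinom q n (k + 1) : ℂ) * ((q : ℂ) * w) ^ (k + 1) := by
    intro k hk
    rw [qPascal1 hq (Finset.mem_range_succ_iff.mp hk)]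
    push_cast
    ring
  calc qS q w (n + 1)
      = (∑ k ∈ Finset.range (n + 1), (qBinom q (n + 1) (k + 1) : ℂ) * w ^ (k + 1))
        + (qBinom q (n + 1) 0 : ℂ) * w ^ 0 := by
        unfold qS
        rw [Finset.sum_range_succ' (fun k => (qBinom q (n + 1) k : ℂ) * w ^ k) (n + 1)]
    _ = (∑ k ∈ Finset.range (n + 1), (w * ((qBinom q n k : ℂ) * w ^ k)
          + (qBinom q n (k + 1) : ℂ) * ((q : ℂ) * w) ^ (k + 1))) + 1 := by
        rw [Finset.sum_congr rfl key, qBinom_zero hq]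
        norm_num
    _ = w * qS q w n + ((qS q ((q : ℂ) * w) n - 1) + 1) := by
        rw [Finset.sum_add_distrib, ← Finset.mul_sum, qS_shift hq]
        unfold qS
        ring
    _ = w * qS q w n + qS q ((q : ℂ) * w) n := by ring

lemma qS_rec2 {q : ℝ} (hq : 0 < q) (w : ℂ) (n : ℕ) :
    qS q ((q : ℂ) * w) (n + 1) = qS q ((q : ℂ) * w) n + (q : ℂ) ^ (n + 1) * w * qS q w n := by
  have key : ∀ k ∈ Finset.range (n + 1), ((qBinom q (n + 1) (k + 1) : ℝ) : ℂ) * ((q : ℂ) * w) ^ (k + 1)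
      = (q : ℂ) ^ (n + 1) * w * ((qBinom q n k : ℂ) * w ^ k)
        + (qBinom q n (k + 1) : ℂ) * ((q : ℂ) * w) ^ (k + 1) := by
    intro k hk
    have hk' : k ≤ n := Finset.mem_range_succ_iff.mp hk
    rw [qPascal2 hq hk']
    push_cast
    rw [mul_pow]
    have : (q : ℂ) ^ (n - k) * (q : ℂ) ^ (k + 1) = (q : ℂ) ^ (n + 1) := by
      rw [← pow_add]
      congr 1
      omega
    calc ((q : ℂ) ^ (n - k) * (qBinom q n k : ℂ) + (qBinom q n (k + 1) : ℂ))
            * ((q : ℂ) ^ (k + 1) * w ^ (k + 1))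
        = ((q : ℂ) ^ (n - k) * (q : ℂ) ^ (k + 1)) * (qBinom q n k : ℂ) * w ^ (k + 1)
          + (qBinom q n (k + 1) : ℂ) * ((q : ℂ) ^ (k + 1) * w ^ (k + 1)) := by ring
      _ = (q : ℂ) ^ (n + 1) * w * ((qBinom q n k : ℂ) * w ^ k)
          + (qBinom q n (k + 1) : ℂ) * ((q : ℂ) ^ (k + 1) * w ^ (k + 1)) := by rw [this]; ring
  calc qS q ((q : ℂ) * w) (n + 1)
      = (∑ k ∈ Finset.range (n + 1), (qBinom q (n + 1) (k + 1) : ℂ) * ((q : ℂ) * w) ^ (k + 1))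
        + (qBinom q (n + 1) 0 : ℂ) * ((q : ℂ) * w) ^ 0 := by
        unfold qS
        rw [Finset.sum_range_succ' (fun k => (qBinom q (n + 1) k : ℂ) * ((q : ℂ) * w) ^ k) (n + 1)]
    _ = (∑ k ∈ Finset.range (n + 1), ((q : ℂ) ^ (n + 1) * w * ((qBinom q n k : ℂ) * w ^ k)
          + (qBinom q n (k + 1) : ℂ) * ((q : ℂ) * w) ^ (k + 1))) + 1 := by
        rw [Finset.sum_congr rfl key, qBinom_zero hq]
        norm_num
    _ = (q : ℂ) ^ (n + 1) * w * qS q w n + ((qS q ((q : ℂ) * w) n - 1) + 1) := by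
        rw [Finset.sum_add_distrib, ← Finset.mul_sum, qS_shift hq]
        unfold qS
        ring
    _ = qS q ((q : ℂ) * w) n + (q : ℂ) ^ (n + 1) * w * qS q w n := by ring

lemma qS_recur {q : ℝ} (hq : 0 < q) (w : ℂ) (n : ℕ) :
    qS q w (n + 2) = (1 + w) * qS q w (n + 1) - (1 - (q : ℂ) ^ (n + 1)) * w * qS q w n := by
  have h0 := qS_rec1 hq w n
  have h1 := qS_rec1 hq w (n + 1)
  have h2 := qS_rec2 hq w n
  rw [h1, h2]
  linear_combination -h0

lemma qS_bound {q : ℝ} (hq : 0 < q) {w : ℂ} (hw : ‖w‖ = 1) (n : ℕ) :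
    ‖qS q w n‖ ≤ ∑ k ∈ Finset.range (n + 1), qBinom q n k := by
  unfold qS
  refine le_trans (norm_sum_le _ _) (le_of_eq (Finset.sum_congr rfl ?_))
  intro k _
  rw [norm_mul, norm_pow, hw, one_pow, mul_one, Complex.norm_real, Real.norm_eq_abs,
    abs_of_nonneg (qBinom_nonneg hq n k)]

lemma qNum_mul_one_sub (q : ℝ) (m : ℕ) : qNum q m * (1 - q) = 1 - q ^ m := by
  have := geom_sum_mul q m
  unfold qNum
  linear_combination -this


theorem qHermite_bound (q : ℝ) (hq0 : 0 < q) (hq1 : q < 1) (n : ℕ) (x : ℝ)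
    (hx : (1 - q) * x ^ 2 ≤ 4) :
    |qHermite q x n| ≤ (∑ i ∈ Finset.range (n + 1), qBinom q n i) * (1 - q) ^ (-(n : ℝ) / 2) := by
  set s : ℝ := Real.sqrt (1 - q) with hs_def
  have h1q : (0 : ℝ) < 1 - q := by linarith
  have hs_pos : 0 < s := Real.sqrt_pos.mpr h1q
  have hs_sq : s ^ 2 = 1 - q := Real.sq_sqrt h1q.le
  set y : ℝ := s * x / 2 with hy_def
  have hy : y ^ 2 ≤ 1 := by
    have : y ^ 2 = (1 - q) * x ^ 2 / 4 := by
      rw [hy_def, div_pow, mul_pow, hs_sq]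
      ring
    rw [this]
    linarith
  set t : ℝ := Real.sqrt (1 - y ^ 2) with ht_def
  have ht_sq : t ^ 2 = 1 - y ^ 2 := Real.sq_sqrt (by linarith)
  set z : ℂ := Complex.mk y t with hz_def
  have hz_re : z.re = y := rfl
  have hz_im : z.im = t := rfl
  set zb : ℂ := Complex.mk y (-t) with hzb_def
  have hmul : z * zb = 1 := by
    apply Complex.ext
    · simp [hz_def, hzb_def, Complex.mul_re]
      nlinarith [ht_sq]
    · simp [hz_def, hzb_def, Complex.mul_im]
      ring
  have hadd : z + zb = ((s * x : ℝ) : ℂ) := by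
    apply Complex.ext
    · show y + y = s * x
      rw [hy_def]
      ring
    · simp [hz_def, hzb_def, Complex.add_im]
  have habs : ‖z‖ = 1 := by
    have : Complex.normSq z = 1 := by
      simp [Complex.normSq_mk, hz_def]
      nlinarith [ht_sq]
    rw [Complex.norm_def, this, Real.sqrt_one]
  -- key representation
  have key : ∀ m : ℕ, ((qHermite q x m : ℝ) : ℂ) * (s : ℂ) ^ m * z ^ m = qS q (z ^ 2) m := by
    have main : ∀ m : ℕ,
        (((qHermite q x m : ℝ) : ℂ) * (s : ℂ) ^ m * z ^ m = qS q (z ^ 2) m) ∧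
        (((qHermite q x (m + 1) : ℝ) : ℂ) * (s : ℂ) ^ (m + 1) * z ^ (m + 1) = qS q (z ^ 2) (m + 1)) := by
      intro m
      induction m with
      | zero =>
        constructor
        · show ((qHermite q x 0 : ℝ) : ℂ) * (s : ℂ) ^ 0 * z ^ 0 = qS q (z ^ 2) 0
          unfold qS
          simp [qHermite, qBinom_zero hq0]
        · show ((qHermite q x 1 : ℝ) : ℂ) * (s : ℂ) ^ 1 * z ^ 1 = qS q (z ^ 2) 1
          unfold qS
          rw [Finset.sum_range_succ, Finset.sum_range_one, qBinom_zero hq0,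
            qBinom_self hq0]
          show ((x : ℝ) : ℂ) * (s : ℂ) ^ 1 * z ^ 1 = _
          have : ((x : ℝ) : ℂ) * (s : ℂ) ^ 1 * z ^ 1 = ((s * x : ℝ) : ℂ) * z := by
            push_cast
            ring
          rw [this, ← hadd]
          push_cast
          linear_combination hmul
      | succ k ih =>
        refine ⟨ih.2, ?_⟩
        have hrec : qHermite q x (k + 2) = x * qHermite q x (k + 1) - qNum q (k + 1) * qHermite q x k := rfl
        have hA : ((qNum q (k + 1) : ℝ) : ℂ) * (s : ℂ) ^ 2 = 1 - (q : ℂ) ^ (k + 1) := by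
          have h := qNum_mul_one_sub q (k + 1)
          rw [← hs_sq] at h
          exact_mod_cast h
        rw [qS_recur hq0 (z ^ 2) k, ← ih.1, ← ih.2, hrec]
        push_cast
        have hadd' : (s : ℂ) * (x : ℂ) = z + zb := by
          rw [hadd]; push_cast; ring
        calc ((x : ℂ) * ((qHermite q x (k + 1) : ℝ) : ℂ) - ((qNum q (k + 1) : ℝ) : ℂ) * ((qHermite q x k : ℝ) : ℂ))
              * (s : ℂ) ^ (k + 2) * z ^ (k + 2)
            = ((s : ℂ) * (x : ℂ)) * z * (((qHermite q x (k + 1) : ℝ) : ℂ) * (s : ℂ) ^ (k + 1) * z ^ (k + 1))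
              - (((qNum q (k + 1) : ℝ) : ℂ) * (s : ℂ) ^ 2) * z ^ 2 * (((qHermite q x k : ℝ) : ℂ) * (s : ℂ) ^ k * z ^ k) := by
              ring
          _ = (z + zb) * z * (((qHermite q x (k + 1) : ℝ) : ℂ) * (s : ℂ) ^ (k + 1) * z ^ (k + 1))
              - (1 - (q : ℂ) ^ (k + 1)) * z ^ 2 * (((qHermite q x k : ℝ) : ℂ) * (s : ℂ) ^ k * z ^ k) := by
              rw [hadd', hA]
          _ = (1 + z ^ 2) * (((qHermite q x (k + 1) : ℝ) : ℂ) * (s : ℂ) ^ (k + 1) * z ^ (k + 1))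
              - (1 - (q : ℂ) ^ (k + 1)) * z ^ 2 * (((qHermite q x k : ℝ) : ℂ) * (s : ℂ) ^ k * z ^ k) := by
              have : (z + zb) * z = 1 + z ^ 2 := by linear_combination hmul
              rw [this]
    exact fun m => (main m).1
  -- conclude
  have habs2 : ‖z ^ 2‖ = 1 := by rw [norm_pow, habs, one_pow]
  have hb := qS_bound hq0 habs2 n
  rw [← key n] at hb
  have hlhs : ‖((qHermite q x n : ℝ) : ℂ) * (s : ℂ) ^ n * z ^ n‖
      = |qHermite q x n| * s ^ n := by
    rw [norm_mul, norm_mul, norm_pow, norm_pow, habs, one_pow, mul_one,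
      Complex.norm_real, Complex.norm_real, Real.norm_eq_abs, Real.norm_eq_abs, abs_of_nonneg hs_pos.le]
  rw [hlhs] at hb
  have hrw : (1 - q) ^ (-(n : ℝ) / 2) = (s ^ n)⁻¹ := by
    rw [show (-(n : ℝ) / 2) = ((1 : ℝ) / 2) * (-(n : ℝ)) by ring,
      Real.rpow_mul h1q.le, ← Real.sqrt_eq_rpow, ← hs_def,
      Real.rpow_neg hs_pos.le, Real.rpow_natCast]
  rw [hrw, ← div_eq_mul_inv, le_div_iff₀ (pow_pos hs_pos n)]
  exact hb
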